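/- arXiv:0710.4047 — 2 statements merged into one kernel-verified Lean document; each statement's English description precedes it below -/
import Mathlib

section
/- Euler's 1772 integral: ∫₀^{π/2} x · log(sin x) dx = (7/16)ζ(3) − (π²/8)·log 2. -/
open Real Filter MeasureTheory intervalIntegral Set

lemma hasDeriv_aux (a : ℝ) (ha : a ≠ 0) (t : ℝ) :
    HasDerivAt (fun t => t * Real.sin (a*t)/a + Real.cos (a*t)/a^2)
      (t * Real.cos (a*t)) t := by
  have h1 : HasDerivAt (fun t : ℝ => a * t) (a * 1) t := (hasDerivAt_id t).const_mul a
  have hs : HasDerivAt (fun t : ℝ => Real.sin (a*t)) (Real.cos (a*t) * (a*1)) t :=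
    (Real.hasDerivAt_sin (a*t)).comp t h1
  have hc : HasDerivAt (fun t : ℝ => Real.cos (a*t)) (-Real.sin (a*t) * (a*1)) t :=
    (Real.hasDerivAt_cos (a*t)).comp t h1
  have H := (((hasDerivAt_id t).mul hs).div_const a).add (hc.div_const (a^2))
  refine H.congr_deriv ?_
  simp only [id]
  field_simp
  ring

lemma integral_x_cos (n : ℕ) :
    ∫ t in (0:ℝ)..(π/2), t * Real.cos (2*((n:ℝ)+1)*t)
      = ((-1:ℝ)^(n+1) - 1)/(4*((n:ℝ)+1)^2) := by
  have hn : (0:ℝ) < (n:ℝ)+1 := by positivity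
  have ha : (2*((n:ℝ)+1)) ≠ 0 := by positivity
  rw [intervalIntegral.integral_eq_sub_of_hasDerivAt
      (fun t _ => hasDeriv_aux _ ha t)
      (by apply Continuous.intervalIntegrable; continuity)]
  have h2 : 2*((n:ℝ)+1)*(π/2) = ((n:ℝ)+1)*π := by ring
  have hsin : Real.sin (((n:ℕ)+1 : ℕ) * π) = 0 := Real.sin_nat_mul_pi (n+1)
  have hcos : Real.cos (((n:ℕ)+1 : ℕ) * π) = (-1)^(n+1) := by
    simpa using Real.cos_nat_mul_pi_sub 0 (n+1)
  push_cast at hsin hcos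
  rw [h2, hsin, hcos]
  simp only [mul_zero, Real.sin_zero, Real.cos_zero, zero_mul, zero_div, zero_add]
  ring

lemma abs_log_sin_le {x : ℝ} (hx : x ∈ Set.Ioc 0 (π/2)) :
    |Real.log (Real.sin x)| ≤ 2 * x ^ (-(1/2) : ℝ) + Real.log π := by
  obtain ⟨hx0, hx2⟩ := hx
  have hsin0 : 0 < Real.sin x := Real.sin_pos_of_pos_of_lt_pi hx0 (by linarith [pi_pos])
  have hlb : 2/π * x ≤ Real.sin x := Real.mul_le_sin hx0.le hx2
  have hub : Real.sin x ≤ 1 := Real.sin_le_one x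
  have hlogle : Real.log (Real.sin x) ≤ 0 := Real.log_nonpos hsin0.le hub
  have h1 : Real.log (2/π * x) ≤ Real.log (Real.sin x) :=
    Real.log_le_log (by positivity) hlb
  rw [abs_of_nonpos hlogle]
  have h2 : Real.log (2/π * x) = Real.log 2 - Real.log π + Real.log x := by
    rw [Real.log_mul (by positivity) hx0.ne', Real.log_div (by norm_num) (by positivity)]
  have h3 : -Real.log (Real.sin x) ≤ Real.log π - Real.log 2 - Real.log x := by
    have := neg_le_neg h1; rw [h2] at this; linarith
  have hlog2 : 0 ≤ Real.log 2 := Real.log_nonneg (by norm_num)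
  have hrp : 0 ≤ x ^ (-(1/2) : ℝ) := Real.rpow_nonneg hx0.le _
  have h4 : -Real.log x ≤ 2 * x ^ (-(1/2) : ℝ) := by
    rcases le_or_gt 1 x with h | h
    · have : 0 ≤ Real.log x := Real.log_nonneg h
      linarith
    · have hinv : -Real.log x = 2 * Real.log (x ^ (-(1/2):ℝ)) := by
        rw [Real.log_rpow hx0]; ring
      rw [hinv]
      have hle : Real.log (x ^ (-(1/2):ℝ)) ≤ x ^ (-(1/2):ℝ) :=
        (Real.log_le_sub_one_of_pos (by positivity)).trans (by linarith)
      linarith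
  linarith

lemma intervalIntegrable_bound :
    IntervalIntegrable (fun x => 2 * x ^ (-(1/2) : ℝ) + Real.log π) volume 0 (π/2) := by
  apply IntervalIntegrable.add
  · exact (intervalIntegral.intervalIntegrable_rpow' (by norm_num)).const_mul 2
  · exact intervalIntegrable_const

lemma intervalIntegrable_log_sin' :
    IntervalIntegrable (fun x => Real.log (Real.sin x)) volume 0 (π/2) := by
  apply IntervalIntegrable.mono_fun intervalIntegrable_bound
  · exact (Real.measurable_log.comp Real.measurable_sin).aestronglyMeasurable
  · rw [Set.uIoc_of_le (by positivity : (0:ℝ) ≤ π/2)]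
    rw [EventuallyLE, ae_restrict_iff' measurableSet_Ioc]
    filter_upwards with x hx
    have h := abs_log_sin_le hx
    have h0 : 0 ≤ 2 * x ^ (-(1/2) : ℝ) + Real.log π := by
      have h1 : (0:ℝ) ≤ 2 * x ^ (-(1/2) : ℝ) := by
        have := Real.rpow_nonneg hx.1.le (-(1/2) : ℝ); linarith
      have h2 : (0:ℝ) ≤ Real.log π := Real.log_nonneg (by linarith [Real.pi_gt_three])
      linarith
    rw [Real.norm_eq_abs, Real.norm_eq_abs, abs_of_nonneg h0]
    exact h

lemma intervalIntegrable_x_log_sin :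
    IntervalIntegrable (fun x => x * Real.log (Real.sin x)) volume 0 (π/2) := by
  apply IntervalIntegrable.mono_fun ((intervalIntegrable_log_sin'.abs).const_mul (π/2))
  · exact (measurable_id.mul (Real.measurable_log.comp Real.measurable_sin)).aestronglyMeasurable
  · rw [Set.uIoc_of_le (by positivity : (0:ℝ) ≤ π/2)]
    rw [EventuallyLE, ae_restrict_iff' measurableSet_Ioc]
    filter_upwards with x hx
    simp only [Real.norm_eq_abs, abs_mul, abs_abs]
    rw [abs_of_nonneg hx.1.le]
    have h1 : x * |Real.log (Real.sin x)| ≤ (π/2) * |Real.log (Real.sin x)| :=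
      mul_le_mul_of_nonneg_right hx.2 (abs_nonneg _)
    have h2 : (π/2) * |Real.log (Real.sin x)| ≤ |π/2| * |Real.log (Real.sin x)| :=
      mul_le_mul_of_nonneg_right (le_abs_self _) (abs_nonneg _)
    linarith

lemma sq_abs_aux (r x : ℝ) :
    ‖1 - (r:ℂ) * Complex.exp ((2*x:ℝ)*Complex.I)‖ ^ 2
      = (1-r)^2 + 4*r*(Real.sin x)^2 := by
  rw [Complex.sq_norm, Complex.exp_mul_I]
  have h1 : (1:ℂ) - (r:ℂ) * (Complex.cos (2*x:ℝ) + Complex.sin (2*x:ℝ) * Complex.I)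
      = ((1 - r * Real.cos (2*x) : ℝ) : ℂ) + ((-(r * Real.sin (2*x)) : ℝ) : ℂ) * Complex.I := by
    rw [← Complex.ofReal_cos, ← Complex.ofReal_sin]
    push_cast; ring
  rw [h1, Complex.normSq_add_mul_I]
  have hc : Real.cos (2*x) = 1 - 2 * Real.sin x ^ 2 := by
    rw [Real.cos_two_mul, ← Real.sin_sq_add_cos_sq x]; ring
  have hs := Real.sin_sq_add_cos_sq (2*x)
  linear_combination r^2 * hs - 2*r*hc

lemma hasSum_series {r x : ℝ} (h0 : 0 ≤ r) (h1 : r < 1) :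
    HasSum (fun n : ℕ => r^(n+1) * Real.cos (2*((n:ℝ)+1)*x) / ((n:ℝ)+1))
      (-(1/2 * Real.log ((1-r)^2 + 4*r*(Real.sin x)^2))) := by
  set z : ℂ := (r:ℂ) * Complex.exp ((2*x:ℝ)*Complex.I) with hz
  have hnorm : ‖z‖ < 1 := by
    rw [hz, norm_mul, Complex.norm_exp_ofReal_mul_I, mul_one, Complex.norm_real,
      Real.norm_eq_abs, abs_of_nonneg h0]
    exact h1
  have H := Complex.hasSum_taylorSeries_neg_log hnorm
  have H1 : HasSum (fun n : ℕ => z^(n+1) / ((n:ℂ)+1)) (-Complex.log (1 - z)) := by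
    have := (hasSum_nat_add_iff' (f := fun n : ℕ => z^n / (n:ℂ)) 1).2 H
    simpa using this
  have H2 := Complex.hasSum_re H1
  have key : ∀ n : ℕ, (z^(n+1) / ((n:ℂ)+1)).re
      = r^(n+1) * Real.cos (2*((n:ℝ)+1)*x) / ((n:ℝ)+1) := by
    intro n
    have hzpow : z^(n+1) = ((r^(n+1) : ℝ) : ℂ) * Complex.exp ((2*((n:ℝ)+1)*x : ℝ)*Complex.I) := by
      rw [hz, mul_pow, ← Complex.exp_nat_mul]
      push_cast
      ring_nf
    rw [hzpow]
    have : (((r^(n+1):ℝ)):ℂ) * Complex.exp ((2*((n:ℝ)+1)*x : ℝ)*Complex.I) / ((n:ℂ)+1)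
        = ((r^(n+1)/((n:ℝ)+1) : ℝ) : ℂ) * Complex.exp ((2*((n:ℝ)+1)*x : ℝ)*Complex.I) := by
      push_cast; ring
    rw [this, Complex.re_ofReal_mul, Complex.exp_ofReal_mul_I_re]
    ring
  have hre : (-Complex.log (1 - z)).re = -(1/2 * Real.log ((1-r)^2 + 4*r*(Real.sin x)^2)) := by
    rw [Complex.neg_re, Complex.log_re]
    congr 1
    have habs := sq_abs_aux r x
    have : Real.log (‖1 - z‖ ^ 2) = 2 * Real.log (‖1 - z‖) :=
      by rw [Real.log_pow]; push_cast; ring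
    rw [← habs, this]; ring
  rw [← hre]
  simpa only [key] using H2

lemma hasSum_integral {r : ℝ} (h0 : 0 ≤ r) (h1 : r < 1) :
    HasSum (fun n : ℕ => (r^(n+1)/((n:ℝ)+1)) * (((-1:ℝ)^(n+1) - 1)/(4*((n:ℝ)+1)^2)))
      (∫ t in (0:ℝ)..(π/2), t * (-(1/2 * Real.log ((1-r)^2 + 4*r*(Real.sin t)^2)))) := by
  have H := intervalIntegral.hasSum_integral_of_dominated_convergence
    (F := fun (n : ℕ) (t : ℝ) => t * (r^(n+1) * Real.cos (2*((n:ℝ)+1)*t) / ((n:ℝ)+1)))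
    (bound := fun (n : ℕ) (_ : ℝ) => 2 * r^(n+1))
    (μ := volume) (a := 0) (b := π/2)
    (f := fun t => t * (-(1/2 * Real.log ((1-r)^2 + 4*r*(Real.sin t)^2))))
    (fun n => by apply Continuous.aestronglyMeasurable; continuity)
    (fun n => by
      filter_upwards with t ht
      rw [Set.uIoc_of_le (by positivity : (0:ℝ) ≤ π/2)] at ht
      have h2 : (2:ℝ) ≤ 2 := le_refl 2
      have hrp : (0:ℝ) ≤ r^(n+1) := by positivity
      have hcos : |Real.cos (2*((n:ℝ)+1)*t)| ≤ 1 := Real.abs_cos_le_one _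
      have hn1 : (1:ℝ) ≤ (n:ℝ)+1 := by have := Nat.cast_nonneg (α := ℝ) n; linarith
      rw [Real.norm_eq_abs, abs_mul, abs_div, abs_mul]
      rw [abs_of_nonneg ht.1.le, abs_of_nonneg hrp, abs_of_nonneg (by positivity : (0:ℝ) ≤ (n:ℝ)+1)]
      have hπ : t ≤ 2 := le_trans ht.2 (by linarith [Real.pi_le_four])
      calc t * (r ^ (n + 1) * |Real.cos (2*((n:ℝ)+1)*t)| / ((n:ℝ)+1))
          ≤ 2 * (r ^ (n + 1) * 1 / 1) := by
            apply mul_le_mul hπ ?_ (by positivity) (by norm_num)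
            exact div_le_div₀ (by positivity) (mul_le_mul_of_nonneg_left hcos hrp) one_pos hn1
        _ = 2 * r^(n+1) := by ring)
    (by
      filter_upwards with t _
      exact ((summable_geometric_of_lt_one h0 h1).mul_left (2*r)).congr
        (fun n => by ring))
    (_root_.intervalIntegrable_const (c := ∑' (n:ℕ), 2 * r^(n+1)))
    (by
      filter_upwards with t _
      exact (hasSum_series h0 h1).mul_left t)
  have Heq : ∀ n : ℕ, (∫ t in (0:ℝ)..(π/2), t * (r^(n+1) * Real.cos (2*((n:ℝ)+1)*t) / ((n:ℝ)+1)))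
      = (r^(n+1)/((n:ℝ)+1)) * (((-1:ℝ)^(n+1) - 1)/(4*((n:ℝ)+1)^2)) := by
    intro n
    have : ∀ t : ℝ, t * (r^(n+1) * Real.cos (2*((n:ℝ)+1)*t) / ((n:ℝ)+1))
        = (r^(n+1)/((n:ℝ)+1)) * (t * Real.cos (2*((n:ℝ)+1)*t)) := by intro t; ring
    simp_rw [this]
    rw [intervalIntegral.integral_const_mul, integral_x_cos]
  simpa only [Heq] using H

noncomputable def u (k : ℕ) : ℝ := 1 - ((k:ℝ)+2)⁻¹

lemma u_mem (k : ℕ) : 1/2 ≤ u k ∧ u k < 1 := by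
  unfold u
  have h2 : (2:ℝ) ≤ (k:ℝ)+2 := by have := Nat.cast_nonneg (α := ℝ) k; linarith
  have hpos : (0:ℝ) < (k:ℝ)+2 := by linarith
  constructor
  · have : ((k:ℝ)+2)⁻¹ ≤ 1/2 := by
      rw [inv_le_comm₀ hpos (by norm_num)]; linarith
    linarith
  · have : (0:ℝ) < ((k:ℝ)+2)⁻¹ := by positivity
    linarith

lemma u_nonneg (k : ℕ) : 0 ≤ u k := le_trans (by norm_num) (u_mem k).1
lemma u_lt_one (k : ℕ) : u k < 1 := (u_mem k).2

lemma tendsto_u : Filter.Tendsto u atTop (nhds 1) := by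
  have hA : Filter.Tendsto (fun k:ℕ => (k:ℝ)+2) atTop atTop :=
    tendsto_atTop_add_const_right _ 2 tendsto_natCast_atTop_atTop
  have hB : Filter.Tendsto (fun k:ℕ => ((k:ℝ)+2)⁻¹) atTop (nhds 0) := hA.inv_tendsto_atTop
  have := (tendsto_const_nhds (x := (1:ℝ))).sub hB
  rw [show u = fun k:ℕ => 1 - ((k:ℝ)+2)⁻¹ from rfl]
  simpa using this

lemma summable_shift3 : Summable (fun n:ℕ => 1/((n:ℝ)+1)^3) := by
  have hT : Summable (fun n:ℕ => 1/((n:ℝ))^3) :=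
    Real.summable_one_div_nat_pow.mpr (by norm_num)
  have := (summable_nat_add_iff 1).2 hT
  apply this.congr
  intro n; push_cast; ring_nf

lemma term_bound {r : ℝ} (hr : |r| ≤ 1) (n : ℕ) :
    |(r^(n+1)/((n:ℝ)+1)) * (((-1:ℝ)^(n+1) - 1)/(4*((n:ℝ)+1)^2))| ≤ 1/((n:ℝ)+1)^3 := by
  have hn1 : (1:ℝ) ≤ (n:ℝ)+1 := by have := Nat.cast_nonneg (α := ℝ) n; linarith
  have hn0 : (0:ℝ) < (n:ℝ)+1 := by linarith
  have h1 : |r^(n+1)| ≤ 1 := by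
    rw [abs_pow]; exact pow_le_one₀ (abs_nonneg r) hr
  have h2 : |(-1:ℝ)^(n+1) - 1| ≤ 2 := by
    have := abs_sub_abs_le_abs_sub ((-1:ℝ)^(n+1)) 1
    have h3 : |(-1:ℝ)^(n+1)| = 1 := by rw [abs_pow, abs_neg, abs_one, one_pow]
    calc |(-1:ℝ)^(n+1) - 1| ≤ |(-1:ℝ)^(n+1)| + |(1:ℝ)| := abs_sub _ _
      _ = 2 := by rw [h3, abs_one]; norm_num
  rw [abs_mul, abs_div, abs_div, abs_of_nonneg hn0.le,
    abs_of_nonneg (by positivity : (0:ℝ) ≤ 4*((n:ℝ)+1)^2)]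
  calc |r^(n+1)|/((n:ℝ)+1) * (|(-1:ℝ)^(n+1) - 1|/(4*((n:ℝ)+1)^2))
      ≤ 1/((n:ℝ)+1) * (2/(4*((n:ℝ)+1)^2)) := by
        apply mul_le_mul
        · exact div_le_div₀ (by norm_num) h1 (by positivity) (le_refl _)
        · exact div_le_div₀ (by norm_num) h2 (by positivity) (le_refl _)
        · positivity
        · positivity
    _ = 2/(4*((n:ℝ)+1)^3) := by rw [div_mul_div_comm, one_mul]; congr 1; ring
    _ ≤ 1/((n:ℝ)+1)^3 := by
        rw [div_le_div_iff₀ (by positivity) (by positivity)]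
        nlinarith [pow_nonneg hn0.le 3]

lemma tendsto_series :
    Filter.Tendsto (fun k => ∑' n:ℕ, ((u k)^(n+1)/((n:ℝ)+1)) * (((-1:ℝ)^(n+1) - 1)/(4*((n:ℝ)+1)^2)))
      atTop (nhds (∑' n:ℕ, (1/((n:ℝ)+1)) * (((-1:ℝ)^(n+1) - 1)/(4*((n:ℝ)+1)^2)))) := by
  apply tendsto_tsum_of_dominated_convergence summable_shift3
  · intro n
    have h := ((tendsto_u.pow (n+1)).div_const ((n:ℝ)+1)).mul_const
      (((-1:ℝ)^(n+1) - 1)/(4*((n:ℝ)+1)^2))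
    simpa using h
  · filter_upwards with k n
    exact term_bound (by rw [abs_of_nonneg (u_nonneg k)]; exact (u_lt_one k).le) n

lemma tendsto_integral_side :
    Filter.Tendsto (fun k => ∫ t in (0:ℝ)..(π/2),
        t * (-(1/2 * Real.log ((1-u k)^2 + 4*(u k)*(Real.sin t)^2)))) atTop
      (nhds (∫ t in (0:ℝ)..(π/2), t * (-(Real.log 2 + Real.log (Real.sin t))))) := by
  apply intervalIntegral.tendsto_integral_filter_of_dominated_convergence
    (bound := fun t => (Real.log 5 + Real.log 2) + 2*|Real.log (Real.sin t)|)
  · filter_upwards with k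
    apply Measurable.aestronglyMeasurable
    apply Measurable.mul measurable_id
    apply Measurable.neg
    apply Measurable.const_mul
    exact Real.measurable_log.comp (by measurability)
  · filter_upwards with k
    filter_upwards with t
    intro ht
    rw [Set.uIoc_of_le (by positivity : (0:ℝ) ≤ π/2)] at ht
    obtain ⟨hu1, hu2⟩ := u_mem k
    have hs0 : 0 < Real.sin t := Real.sin_pos_of_pos_of_lt_pi ht.1 (by linarith [pi_pos, ht.2])
    have hs1 : Real.sin t ≤ 1 := Real.sin_le_one t
    set s := Real.sin t with hs
    set a := (1-u k)^2 + 4*(u k)*s^2 with ha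
    have ha5 : a ≤ 5 := by nlinarith [sq_nonneg (1 - u k), sq_nonneg s]
    have ha2 : 2*s^2 ≤ a := by nlinarith [sq_nonneg (1 - u k), sq_nonneg s]
    have hapos : 0 < a := lt_of_lt_of_le (by positivity) ha2
    have hlogup : Real.log a ≤ Real.log 5 := Real.log_le_log hapos ha5
    have hlogdown : Real.log 2 + 2*Real.log s ≤ Real.log a := by
      have h1 : Real.log (2*s^2) ≤ Real.log a := Real.log_le_log (by positivity) ha2
      have h2 : Real.log (2*s^2) = Real.log 2 + 2*Real.log s := by
        rw [Real.log_mul (by norm_num) (by positivity), Real.log_pow]; push_cast; ring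
      linarith
    have hl5 : 0 ≤ Real.log 5 := Real.log_nonneg (by norm_num)
    have hl2 : 0 ≤ Real.log 2 := Real.log_nonneg (by norm_num)
    have habs : |Real.log a| ≤ Real.log 5 + Real.log 2 + 2*|Real.log s| := by
      rw [abs_le]
      constructor
      · have := neg_abs_le (Real.log s); linarith
      · have := abs_nonneg (Real.log s); linarith
    have ht2 : t ≤ 2 := le_trans ht.2 (by linarith [Real.pi_le_four])
    rw [Real.norm_eq_abs, abs_mul, abs_of_nonneg ht.1.le, abs_neg, abs_mul,
      abs_of_nonneg (by norm_num : (0:ℝ) ≤ (1:ℝ)/2)]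
    calc t * (1/2 * |Real.log a|) ≤ 2 * (1/2 * (Real.log 5 + Real.log 2 + 2*|Real.log s|)) := by
          apply mul_le_mul ht2 _ (by positivity) (by norm_num)
          apply mul_le_mul_of_nonneg_left habs (by norm_num)
      _ = (Real.log 5 + Real.log 2) + 2*|Real.log s| := by ring
  · exact IntervalIntegrable.add intervalIntegrable_const
      ((intervalIntegrable_log_sin'.abs).const_mul 2)
  · filter_upwards with t
    intro ht
    rw [Set.uIoc_of_le (by positivity : (0:ℝ) ≤ π/2)] at ht
    have hs0 : 0 < Real.sin t := Real.sin_pos_of_pos_of_lt_pi ht.1 (by linarith [pi_pos, ht.2])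
    have hA : Filter.Tendsto (fun k => (1-u k)^2 + 4*(u k)*(Real.sin t)^2) atTop
        (nhds (4*(Real.sin t)^2)) := by
      have h1 := (((tendsto_const_nhds (x := (1:ℝ))).sub tendsto_u).pow 2).add
        ((tendsto_u.const_mul 4).mul_const ((Real.sin t)^2))
      have : ((1:ℝ) - 1)^2 + 4*1*(Real.sin t)^2 = 4*(Real.sin t)^2 := by ring
      rw [this] at h1
      exact h1
    have hlog : Filter.Tendsto (fun k => Real.log ((1-u k)^2 + 4*(u k)*(Real.sin t)^2)) atTop
        (nhds (Real.log (4*(Real.sin t)^2))) :=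
      ((Real.continuousAt_log (by positivity)).tendsto).comp hA
    have hfin := ((hlog.const_mul (1/2)).neg).const_mul t
    have hval : t * (-(1/2 * Real.log (4*(Real.sin t)^2)))
        = t * (-(Real.log 2 + Real.log (Real.sin t))) := by
      rw [show (4:ℝ)*(Real.sin t)^2 = 2^2 * (Real.sin t)^2 by norm_num,
        Real.log_mul (by norm_num) (by positivity), Real.log_pow, Real.log_pow]
      push_cast; ring
    rw [← hval]
    exact hfin

lemma sum_eval :
    ∑' n:ℕ, (1/((n:ℝ)+1)) * (((-1:ℝ)^(n+1) - 1)/(4*((n:ℝ)+1)^2))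
      = -(7/16) * ∑' n:ℕ, 1/((n:ℝ))^3 := by
  have hφ : Summable (fun n:ℕ => 1/((n:ℝ))^3) :=
    Real.summable_one_div_nat_pow.mpr (by norm_num)
  have heq8 : ∀ k:ℕ, 1/(((2*k:ℕ)):ℝ)^3 = (1/8) * (1/((k:ℝ))^3) := by
    intro k; push_cast; rcases eq_or_ne (k:ℝ) 0 with h | h
    · rw [h]; norm_num
    · field_simp; ring
  have he : Summable (fun k:ℕ => 1/(((2*k:ℕ)):ℝ)^3) :=
    (hφ.mul_left (1/8)).congr (fun k => (heq8 k).symm)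
  have hooble : ∀ k:ℕ, 1/(((2*k+1:ℕ)):ℝ)^3 ≤ 1/((k:ℝ)+1)^3 := by
    intro k
    have hk : ((k:ℝ)+1) ≤ ((2*k+1:ℕ):ℝ) := by push_cast; linarith [Nat.cast_nonneg (α := ℝ) k]
    exact one_div_le_one_div_of_le (by positivity) (pow_le_pow_left₀ (by positivity) hk 3)
  have ho : Summable (fun k:ℕ => 1/(((2*k+1:ℕ)):ℝ)^3) :=
    Summable.of_nonneg_of_le (fun k => by positivity) hooble summable_shift3
  have hsplit := tsum_even_add_odd (f := fun n:ℕ => 1/((n:ℝ))^3) he ho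
  have heven : ∑' k:ℕ, 1/(((2*k:ℕ)):ℝ)^3 = (1/8) * ∑' n:ℕ, 1/((n:ℝ))^3 := by
    rw [tsum_congr heq8, tsum_mul_left]
  have hodd : ∑' k:ℕ, 1/(((2*k+1:ℕ)):ℝ)^3 = (7/8) * ∑' n:ℕ, 1/((n:ℝ))^3 := by
    have := hsplit; rw [heven] at this; linarith
  -- now the main series
  have hterm : ∀ n:ℕ, (1/((n:ℝ)+1)) * (((-1:ℝ)^(n+1) - 1)/(4*((n:ℝ)+1)^2))
      = ((-1:ℝ)^(n+1) - 1)/(4*((n:ℝ)+1)^3) := by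
    intro n
    rw [div_mul_div_comm, one_mul]; congr 1; ring
  rw [tsum_congr hterm]
  have feq_even : ∀ k:ℕ, ((-1:ℝ)^(2*k+1) - 1)/(4*(((2*k:ℕ):ℝ)+1)^3)
      = -(1/2) * (1/(((2*k+1:ℕ)):ℝ)^3) := by
    intro k
    rw [Odd.neg_one_pow ⟨k, by ring⟩]
    push_cast
    have h1 : (0:ℝ) < 2*(k:ℝ)+1 := by linarith [Nat.cast_nonneg (α := ℝ) k]
    field_simp
    ring
  have feq_odd : ∀ k:ℕ, ((-1:ℝ)^(2*k+1+1) - 1)/(4*(((2*k+1:ℕ):ℝ)+1)^3) = 0 := by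
    intro k
    rw [Even.neg_one_pow ⟨k+1, by ring⟩]
    norm_num
  have hfe : Summable (fun k:ℕ => ((-1:ℝ)^(2*k+1) - 1)/(4*(((2*k:ℕ):ℝ)+1)^3)) :=
    (ho.mul_left (-(1/2))).congr (fun k => (feq_even k).symm)
  have hfo : Summable (fun k:ℕ => ((-1:ℝ)^(2*k+1+1) - 1)/(4*(((2*k+1:ℕ):ℝ)+1)^3)) :=
    summable_zero.congr (fun k => (feq_odd k).symm)
  have hsplit2 := tsum_even_add_odd (f := fun n:ℕ => ((-1:ℝ)^(n+1) - 1)/(4*((n:ℝ)+1)^3)) hfe hfo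
  rw [← hsplit2, tsum_congr feq_even, tsum_congr feq_odd, tsum_mul_left, tsum_zero, hodd]
  ring

theorem euler_1772_integral :
    ((∫ x in (0:ℝ)..(π/2), x * Real.log (Real.sin x) : ℝ) : ℂ)
      = (7/16) * riemannZeta 3 - ((π : ℂ)^2/8) * (Real.log 2 : ℂ) := by
  set T : ℝ := ∑' n:ℕ, 1/((n:ℝ))^3 with hT
  set I : ℝ := ∫ x in (0:ℝ)..(π/2), x * Real.log (Real.sin x) with hI
  have hseq : (fun k:ℕ => ∑' n:ℕ, ((u k)^(n+1)/((n:ℝ)+1)) * (((-1:ℝ)^(n+1) - 1)/(4*((n:ℝ)+1)^2)))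
      = (fun k:ℕ => ∫ t in (0:ℝ)..(π/2),
          t * (-(1/2 * Real.log ((1-u k)^2 + 4*(u k)*(Real.sin t)^2)))) :=
    funext (fun k => (hasSum_integral (u_nonneg k) (u_lt_one k)).tsum_eq)
  have h1 := tendsto_series
  rw [hseq] at h1
  have h2 := tendsto_nhds_unique h1 tendsto_integral_side
  have h3 : ∫ t in (0:ℝ)..(π/2), t * (-(Real.log 2 + Real.log (Real.sin t)))
      = -(Real.log 2 * (π^2/8)) - I := by
    have hstep : ∫ t in (0:ℝ)..(π/2), t * (-(Real.log 2 + Real.log (Real.sin t)))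
        = ∫ t in (0:ℝ)..(π/2), ((-Real.log 2)*t + (-(t * Real.log (Real.sin t)))) := by
      apply intervalIntegral.integral_congr
      intro t _
      ring
    have hfg1 : IntervalIntegrable (fun t:ℝ => (-Real.log 2)*t) volume 0 (π/2) := by
      apply Continuous.intervalIntegrable; continuity
    have hfg2 : IntervalIntegrable (fun t:ℝ => -(t * Real.log (Real.sin t))) volume 0 (π/2) :=
      intervalIntegrable_x_log_sin.neg
    rw [hstep, intervalIntegral.integral_add hfg1 hfg2,
      intervalIntegral.integral_neg, intervalIntegral.integral_const_mul, integral_id, hI]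
    ring
  rw [sum_eval, h3] at h2
  have hIval : I = (7/16)*T - Real.log 2 * (π^2/8) := by rw [← hT] at h2; linarith
  have hz : riemannZeta 3 = ((T:ℝ):ℂ) := by
    rw [hT, show (3:ℂ) = ((3:ℕ):ℂ) by norm_num, zeta_nat_eq_tsum_of_gt_one (by norm_num),
      Complex.ofReal_tsum]
    exact tsum_congr fun n => by push_cast; ring
  rw [hIval, hz]
  push_cast
  ring
end

section
/- (π/2)·log 2 = ∑_{n=0}^∞ C(2n, n) / ((2n+1)²·2^{2n}), where C(2n, n) is the central binomial coefficient. -/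
open Real Finset MeasureTheory intervalIntegral



noncomputable def cb (n : ℕ) : ℝ := (Nat.choose (2*n) n : ℝ) / 4^n

lemma cb_nonneg (n : ℕ) : 0 ≤ cb n := by unfold cb; positivity

lemma choose_le_four_pow (n : ℕ) : Nat.choose (2*n) n ≤ 4^n := by
  calc Nat.choose (2*n) n ≤ ∑ k ∈ range (2*n+1), Nat.choose (2*n) k :=
        Finset.single_le_sum (fun k _ => Nat.zero_le _) (by simp [Nat.lt_succ_iff]; omega)
    _ = 4^n := by rw [Nat.sum_range_choose]; rw [show 4 = 2^2 from rfl, ← pow_mul]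

lemma cb_le_one (n : ℕ) : cb n ≤ 1 := by
  rw [cb, div_le_one (by positivity)]
  exact_mod_cast choose_le_four_pow n

lemma cb_succ (n : ℕ) : (2*(n:ℝ)+2) * cb (n+1) = (2*n+1) * cb n := by
  have h := Nat.succ_mul_centralBinom_succ n
  rw [Nat.centralBinom, Nat.centralBinom] at h
  have h' : ((n:ℝ)+1) * (Nat.choose (2*(n+1)) (n+1) : ℝ)
      = 2 * (2*n+1) * Nat.choose (2*n) n := by exact_mod_cast congrArg (Nat.cast : ℕ → ℝ) h
  have h4 : (0:ℝ) < 4^n := by positivity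
  rw [cb, cb, pow_succ]
  field_simp
  linear_combination (2:ℝ) * h'
lemma cb_zero : cb 0 = 1 := by simp [cb]



noncomputable def Pc (n : ℕ) (x : ℝ) : ℝ := ∑ k ∈ range n, cb k * x^(2*k)

lemma cb_one : cb 1 = 1/2 := by
  have h := cb_succ 0
  rw [cb_zero] at h
  push_cast at h
  linarith

lemma hasDerivAt_cosP (n : ℕ) (θ : ℝ) :
    HasDerivAt (fun θ => cos θ * Pc n (sin θ))
      (-(2*(n:ℝ) * cb n * sin θ^(2*n-1))) θ := by
  set w : ℕ → ℝ := fun k => 2*(k:ℝ) * cb k * sin θ^(2*k-1) with hw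
  have hterm : ∀ k, HasDerivAt (fun θ => cb k * (cos θ * sin θ^(2*k)))
      (w k - w (k+1)) θ := by
    intro k
    have h1 := (Real.hasDerivAt_cos θ).fun_mul ((Real.hasDerivAt_sin θ).fun_pow (2*k))
    have h2 := h1.const_mul (cb k)
    convert h2 using 1 <;> try rfl
    have hcb : 2*((k:ℝ)+1) * cb (k+1) = (2*(k:ℝ)+1) * cb k := by
      have := cb_succ k; push_cast at this ⊢; linarith
    simp only [hw]
    push_cast
    rw [hcb]
    rcases Nat.eq_zero_or_pos k with hk | hk
    · subst hk
      norm_num [cb_zero, cb_one]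
    · have hc2 : cos θ^2 = 1 - sin θ^2 := cos_sq' θ
      have e2' : sin θ^(2*k) = sin θ^(2*k-1) * sin θ := by
        rw [← pow_succ]; congr 1; omega
      have e1' : sin θ^(2*(k+1)-1) = sin θ^(2*k-1) * sin θ^2 := by
        rw [← pow_add]; congr 1; omega
      rw [e2', e1']
      linear_combination (-(2*(k:ℝ)) * cb k * sin θ^(2*k-1)) * hc2
  have hsum : HasDerivAt (fun θ => ∑ k ∈ range n, cb k * (cos θ * sin θ^(2*k)))
      (∑ k ∈ range n, (w k - w (k+1))) θ :=
    HasDerivAt.fun_sum (fun k _ => hterm k)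
  rw [Finset.sum_range_sub' w n] at hsum
  have hw0 : w 0 = 0 := by simp [hw]
  rw [hw0, zero_sub] at hsum
  have hfun : (fun θ => cos θ * Pc n (sin θ))
      = (fun θ => ∑ k ∈ range n, cb k * (cos θ * sin θ^(2*k))) := by
    funext θ
    rw [Pc, Finset.mul_sum]
    congr 1; ext k; ring
  rw [hfun]
  exact hsum



noncomputable def Sp (n : ℕ) (θ : ℝ) : ℝ := ∑ k ∈ range n, cb k * sin θ^(2*k+1)/(2*k+1)

lemma hasDerivAt_Sp (n : ℕ) (θ : ℝ) :
    HasDerivAt (Sp n) (cos θ * Pc n (sin θ)) θ := by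
  have hterm : ∀ k : ℕ, HasDerivAt (fun θ => cb k * sin θ^(2*k+1)/(2*k+1))
      (cb k * sin θ^(2*k) * cos θ) θ := by
    intro k
    have h1 := ((Real.hasDerivAt_sin θ).pow (2*k+1)).const_mul (cb k)
    have h2 := h1.div_const (2*(k:ℝ)+1)
    convert h2 using 1 <;> try rfl
    push_cast
    have hne : (2*(k:ℝ)+1) ≠ 0 := by positivity
    field_simp
  have hsum := HasDerivAt.fun_sum (fun k (_ : k ∈ range n) => hterm k)
  have hfun : Sp n = fun θ => ∑ k ∈ range n, cb k * sin θ^(2*k+1)/(2*k+1) := rfl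
  rw [hfun]
  convert hsum using 1 <;> try rfl
  rw [Pc, Finset.mul_sum]
  congr 1; ext k; ring

-- the remainder function g
lemma g_bound (n : ℕ) (hn : 1 ≤ n) {θ : ℝ} (h0 : 0 ≤ θ) (h2 : θ ≤ π/2) :
    0 ≤ 1 - cos θ * Pc n (sin θ) ∧
      1 - cos θ * Pc n (sin θ) ≤ 2*(n:ℝ) * cb n * sin θ^(2*n-1) * θ := by
  have hg : ∀ u : ℝ, HasDerivAt (fun u => 1 - cos u * Pc n (sin u))
      (2*(n:ℝ) * cb n * sin u^(2*n-1)) u := by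
    intro u
    simpa using (hasDerivAt_cosP n u).const_sub 1
  have hcont : Continuous fun u : ℝ => 2*(n:ℝ) * cb n * sin u^(2*n-1) := by continuity
  have hftc : (1 - cos θ * Pc n (sin θ)) =
      ∫ u in (0:ℝ)..θ, 2*(n:ℝ) * cb n * sin u^(2*n-1) := by
    have h := intervalIntegral.integral_eq_sub_of_hasDerivAt
      (f := fun u => 1 - cos u * Pc n (sin u))
      (fun u _ => hg u) (hcont.intervalIntegrable 0 θ)
    rw [h]
    have hP0 : Pc n 0 = 1 := by
      rw [Pc]
      rw [Finset.sum_eq_single 0]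
      · simp [cb_zero]
      · intro k _ hk
        have : 0 < 2*k := by omega
        simp [zero_pow (by omega : 2*k ≠ 0)]
      · intro h; exact absurd (Finset.mem_range.2 (by omega)) h
    simp [hP0]
  constructor
  · rw [hftc]
    apply intervalIntegral.integral_nonneg h0
    intro u hu
    have hsu : 0 ≤ sin u := sin_nonneg_of_nonneg_of_le_pi hu.1 (by linarith [pi_pos, hu.2])
    exact mul_nonneg (mul_nonneg (by positivity) (cb_nonneg n)) (pow_nonneg hsu _)
  · rw [hftc]
    have hb : ∀ u ∈ Set.Icc (0:ℝ) θ,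
        2*(n:ℝ) * cb n * sin u^(2*n-1) ≤ 2*(n:ℝ) * cb n * sin θ^(2*n-1) := by
      intro u hu
      have hsu : 0 ≤ sin u := sin_nonneg_of_nonneg_of_le_pi hu.1 (by linarith [pi_pos, hu.2])
      have hmono : sin u ≤ sin θ :=
        sin_le_sin_of_le_of_le_pi_div_two (by linarith [pi_pos, hu.1]) h2 hu.2
      have hpow := pow_le_pow_left₀ hsu hmono (2*n-1)
      exact mul_le_mul_of_nonneg_left hpow (mul_nonneg (by positivity) (cb_nonneg n))
    calc (∫ u in (0:ℝ)..θ, 2*(n:ℝ) * cb n * sin u^(2*n-1))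
        ≤ ∫ _ in (0:ℝ)..θ, 2*(n:ℝ) * cb n * sin θ^(2*n-1) := by
          apply intervalIntegral.integral_mono_on h0
            (hcont.intervalIntegrable 0 θ) (intervalIntegrable_const)
          exact hb
      _ = 2*(n:ℝ) * cb n * sin θ^(2*n-1) * θ := by
          simp
          ring



lemma Sp_remainder (n : ℕ) (hn : 1 ≤ n) {θ : ℝ} (h0 : 0 ≤ θ) (h2 : θ ≤ π/2) :
    0 ≤ θ - Sp n θ ∧ θ - Sp n θ ≤ 2*(n:ℝ) * cb n * sin θ^(2*n-1) * θ^2 := by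
  have hR : ∀ u : ℝ, HasDerivAt (fun u => u - Sp n u) (1 - cos u * Pc n (sin u)) u :=
    fun u => (hasDerivAt_id u).sub (hasDerivAt_Sp n u)
  have hgc : Continuous fun u : ℝ => 1 - cos u * Pc n (sin u) := by
    have : Continuous fun x : ℝ => Pc n x := by
      unfold Pc; exact continuous_finset_sum _ (fun k _ => by continuity)
    continuity
  have hS0 : Sp n 0 = 0 := by
    unfold Sp; simp
  have hftc : θ - Sp n θ = ∫ u in (0:ℝ)..θ, (1 - cos u * Pc n (sin u)) := by
    rw [intervalIntegral.integral_eq_sub_of_hasDerivAt (fun u _ => hR u)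
      (hgc.intervalIntegrable 0 θ)]
    simp [hS0]
  constructor
  · rw [hftc]
    apply intervalIntegral.integral_nonneg h0
    intro u hu
    exact (g_bound n hn hu.1 (le_trans hu.2 h2)).1
  · rw [hftc]
    have hb : ∀ u ∈ Set.Icc (0:ℝ) θ,
        1 - cos u * Pc n (sin u) ≤ 2*(n:ℝ) * cb n * sin θ^(2*n-1) * θ := by
      intro u hu
      refine le_trans (g_bound n hn hu.1 (le_trans hu.2 h2)).2 ?_
      have hsu : 0 ≤ sin u := sin_nonneg_of_nonneg_of_le_pi hu.1 (by linarith [pi_pos, hu.2])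
      have hmono : sin u ≤ sin θ :=
        sin_le_sin_of_le_of_le_pi_div_two (by linarith [pi_pos, hu.1]) h2 hu.2
      have hpow := pow_le_pow_left₀ hsu hmono (2*n-1)
      have h1 : 2*(n:ℝ) * cb n * sin u^(2*n-1) ≤ 2*(n:ℝ) * cb n * sin θ^(2*n-1) :=
        mul_le_mul_of_nonneg_left hpow (mul_nonneg (by positivity) (cb_nonneg n))
      have hsθ : 0 ≤ sin θ := hsu.trans hmono
      nlinarith [hu.1, hu.2, mul_nonneg (mul_nonneg (by positivity : (0:ℝ) ≤ 2*(n:ℝ)) (cb_nonneg n)) (pow_nonneg hsu (2*n-1))]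
    calc (∫ u in (0:ℝ)..θ, (1 - cos u * Pc n (sin u)))
        ≤ ∫ _ in (0:ℝ)..θ, 2*(n:ℝ) * cb n * sin θ^(2*n-1) * θ := by
          exact intervalIntegral.integral_mono_on h0 (hgc.intervalIntegrable 0 θ)
            intervalIntegrable_const hb
      _ = 2*(n:ℝ) * cb n * sin θ^(2*n-1) * θ^2 := by
          rw [intervalIntegral.integral_const, smul_eq_mul]; ring

lemma hasSum_arcsin {θ : ℝ} (h0 : 0 < θ) (h2 : θ < π/2) :
    HasSum (fun k : ℕ => cb k * sin θ^(2*k+1)/(2*(k:ℝ)+1)) θ := by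
  set q := sin θ with hq
  have hq0 : 0 < q := sin_pos_of_pos_of_lt_pi h0 (by linarith [pi_pos])
  have hq1 : q < 1 := by
    have hc : 0 < cos θ := cos_pos_of_mem_Ioo ⟨by linarith [pi_pos], h2⟩
    nlinarith [sin_sq_add_cos_sq θ]
  -- summability
  have hsummable : Summable (fun k : ℕ => cb k * sin θ^(2*k+1)/(2*(k:ℝ)+1)) := by
    apply Summable.of_nonneg_of_le
      (fun k => by
        have : (0:ℝ) ≤ sin θ^(2*k+1) := pow_nonneg hq0.le _
        have := cb_nonneg k
        positivity)
      (fun k => ?_) (summable_geometric_of_lt_one (by positivity) (by nlinarith : q^2 < 1))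
    have h1 : cb k * sin θ^(2*k+1)/(2*(k:ℝ)+1) ≤ sin θ^(2*k+1) := by
      rw [div_le_iff₀ (by positivity)]
      have hp : (0:ℝ) ≤ sin θ^(2*k+1) := pow_nonneg hq0.le _
      nlinarith [cb_le_one k, cb_nonneg k, mul_nonneg (cb_nonneg k) hp]
    refine h1.trans ?_
    have he : sin θ^(2*k+1) = (q^2)^k * q := by rw [← pow_mul, ← pow_succ]
    rw [he]
    exact mul_le_of_le_one_right (pow_nonneg (by positivity) k) hq1.le
  -- partial sums tend to θ
  have htendS : Filter.Tendsto (fun n => Sp n θ) Filter.atTop (nhds θ) := by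
    have hbound : ∀ n : ℕ, 1 ≤ n → |Sp n θ - θ| ≤ 2*(n:ℝ) * q^(2*n-1) * θ^2 := by
      intro n hn
      obtain ⟨hl, hr⟩ := Sp_remainder n hn h0.le h2.le
      rw [abs_sub_comm, abs_of_nonneg hl]
      refine hr.trans ?_
      nlinarith [mul_nonneg (mul_nonneg (by positivity : (0:ℝ) ≤ 2*(n:ℝ)*θ^2) (pow_nonneg hq0.le (2*n-1))) (sub_nonneg.2 (cb_le_one n))]
    have hb0 : Filter.Tendsto (fun n : ℕ => 2*(n:ℝ) * q^(2*n-1) * θ^2) Filter.atTop (nhds 0) := by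
      have h1 : Filter.Tendsto (fun n : ℕ => (n:ℝ) * (q^2)^n) Filter.atTop (nhds 0) := by
        have := (summable_pow_mul_geometric_of_norm_lt_one 1
          (by rw [norm_eq_abs, abs_of_nonneg (by positivity : (0:ℝ) ≤ q^2)]; nlinarith : ‖q^2‖ < 1)).tendsto_atTop_zero
        simpa using this
      have heq : ∀ n : ℕ, 1 ≤ n → 2*(n:ℝ) * q^(2*n-1) * θ^2 = ((n:ℝ) * (q^2)^n) * (2*θ^2/q) := by
        intro n hn
        have : q^(2*n-1) = (q^2)^n / q := by
          rw [← pow_mul, eq_div_iff hq0.ne', ← pow_succ]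
          congr 1
          omega
        rw [this]
        field_simp
      have := h1.mul_const (2*θ^2/q)
      rw [zero_mul] at this
      apply this.congr'
      filter_upwards [Filter.eventually_ge_atTop 1] with n hn
      rw [heq n hn]
    have : Filter.Tendsto (fun n => Sp n θ - θ) Filter.atTop (nhds 0) := by
      apply squeeze_zero_norm' _ hb0
      filter_upwards [Filter.eventually_ge_atTop 1] with n hn
      rw [Real.norm_eq_abs]
      exact hbound n hn
    simpa using this.add_const θ
  have h3 := hsummable.hasSum
  have h4 := h3.tendsto_sum_nat
  have : ∑' k, cb k * sin θ^(2*k+1)/(2*(k:ℝ)+1) = θ :=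
    tendsto_nhds_unique h4 htendS
  rwa [this] at h3



noncomputable def fterm (k : ℕ) (θ : ℝ) : ℝ := cb k * sin θ^(2*k) * cos θ / (2*(k:ℝ)+1)

lemma fterm_cont (k : ℕ) : Continuous (fterm k) := by
  unfold fterm; fun_prop

lemma fterm_integral (k : ℕ) :
    ∫ θ in Set.Ioo (0:ℝ) (π/2), fterm k θ = cb k / (2*(k:ℝ)+1)^2 := by
  rw [← integral_Ioc_eq_integral_Ioo,
    ← intervalIntegral.integral_of_le (by positivity : (0:ℝ) ≤ π/2)]
  have hd : ∀ θ ∈ Set.uIcc (0:ℝ) (π/2), HasDerivAt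
      (fun θ => cb k * sin θ^(2*k+1) / ((2*(k:ℝ)+1)^2)) (fterm k θ) θ := by
    intro θ _
    have h1 := (((Real.hasDerivAt_sin θ).pow (2*k+1)).const_mul (cb k)).div_const ((2*(k:ℝ)+1)^2)
    convert h1 using 1 <;> try rfl
    unfold fterm
    push_cast
    have hne : (2*(k:ℝ)+1) ≠ 0 := by positivity
    field_simp
  rw [intervalIntegral.integral_eq_sub_of_hasDerivAt (fun θ hθ => hd θ hθ)
    ((fterm_cont k).intervalIntegrable 0 (π/2))]
  rw [sin_pi_div_two, sin_zero]
  have hne : (2*(k:ℝ)+1) ≠ 0 := by positivity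
  field_simp
  simp

lemma summable_a : Summable (fun k : ℕ => cb k / (2*(k:ℝ)+1)^2) := by
  apply Summable.of_nonneg_of_le (fun k => by have := cb_nonneg k; positivity)
    (fun k => ?_) ((summable_nat_add_iff 1).2 (Real.summable_one_div_nat_pow.2 one_lt_two))
  have h1 : ((k:ℝ)+1)^2 ≤ (2*(k:ℝ)+1)^2 := by nlinarith [Nat.cast_nonneg (α := ℝ) k]
  have h2 : (0:ℝ) < ((k:ℝ)+1)^2 := by positivity
  calc cb k / (2*(k:ℝ)+1)^2 ≤ 1 / (2*(k:ℝ)+1)^2 := by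
        gcongr
        exact cb_le_one k
    _ ≤ 1 / ((k:ℝ)+1)^2 := by
        apply one_div_le_one_div_of_le h2 h1
    _ = 1 / ((k+1:ℕ):ℝ)^2 := by push_cast; ring

lemma sum_eq_integral :
    ∑' k : ℕ, cb k / (2*(k:ℝ)+1)^2
      = ∫ θ in Set.Ioo (0:ℝ) (π/2), θ * cos θ / sin θ := by
  have hμ : ∀ k : ℕ, Integrable (fterm k) (volume.restrict (Set.Ioo (0:ℝ) (π/2))) := by
    intro k
    exact ((fterm_cont k).integrableOn_Ioc).mono_set Set.Ioo_subset_Ioc_self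
  have hnorm : ∀ k : ℕ, (∫ θ in Set.Ioo (0:ℝ) (π/2), ‖fterm k θ‖) = cb k / (2*(k:ℝ)+1)^2 := by
    intro k
    rw [← fterm_integral k]
    apply MeasureTheory.integral_congr_ae
    refine (ae_restrict_iff' measurableSet_Ioo).2 ?_
    filter_upwards with θ hθ
    rw [Real.norm_eq_abs, abs_of_nonneg]
    have hs : 0 ≤ sin θ := sin_nonneg_of_nonneg_of_le_pi hθ.1.le (by linarith [pi_pos, hθ.2])
    have hc : 0 ≤ cos θ := cos_nonneg_of_mem_Icc ⟨by linarith [pi_pos, hθ.1], hθ.2.le⟩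
    have := cb_nonneg k
    unfold fterm
    positivity
  have hsum : Summable fun k : ℕ => ∫ θ in Set.Ioo (0:ℝ) (π/2), ‖fterm k θ‖ := by
    simp_rw [hnorm]; exact summable_a
  have h := MeasureTheory.integral_tsum_of_summable_integral_norm hμ hsum
  simp_rw [fterm_integral] at h
  rw [h]
  apply setIntegral_congr_fun measurableSet_Ioo
  intro θ hθ
  have hθ0 : 0 < θ := hθ.1
  have hθ2 : θ < π/2 := hθ.2
  have hs : 0 < sin θ := sin_pos_of_pos_of_lt_pi hθ0 (by linarith [pi_pos])
  have h1 := (hasSum_arcsin hθ0 hθ2).mul_left (cos θ / sin θ)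
  have h2 : ∀ k : ℕ, cos θ / sin θ * (cb k * sin θ^(2*k+1)/(2*(k:ℝ)+1)) = fterm k θ := by
    intro k
    unfold fterm
    rw [pow_succ]
    field_simp
  rw [funext h2] at h1
  dsimp only
  rw [h1.tsum_eq]
  ring


lemma contF : ContinuousOn (fun θ : ℝ => θ * log (sin θ)) (Set.Icc 0 (π/2)) := by
  intro θ hθ
  rcases eq_or_lt_of_le hθ.1 with h0 | h0
  · -- θ = 0
    subst h0
    have hup : Filter.Tendsto (fun θ : ℝ => θ * log (sin θ)) (nhdsWithin 0 (Set.Ioi 0)) (nhds 0) := by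
      have hlow : Filter.Tendsto (fun θ : ℝ => log θ * θ + θ * log (2/π))
          (nhdsWithin 0 (Set.Ioi 0)) (nhds 0) := by
        have g1 : Filter.Tendsto (fun θ : ℝ => log θ * θ) (nhdsWithin 0 (Set.Ioi 0)) (nhds 0) := by
          simpa using tendsto_log_mul_rpow_nhdsGT_zero one_pos
        have g2 : Filter.Tendsto (fun θ : ℝ => θ * log (2/π)) (nhdsWithin 0 (Set.Ioi 0)) (nhds 0) := by
          have h := Continuous.tendsto (show Continuous (fun θ : ℝ => θ * log (2/π)) by fun_prop) 0
          simp only [zero_mul] at h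
          exact h.mono_left nhdsWithin_le_nhds
        simpa using g1.add g2
      apply tendsto_of_tendsto_of_tendsto_of_le_of_le' hlow tendsto_const_nhds
      · filter_upwards [Ioo_mem_nhdsGT_of_mem (Set.mem_Ico.2 ⟨le_refl 0, pi_div_two_pos⟩)] with θ hθ
        have hθ0 : 0 < θ := hθ.1
        have hs : 2/π * θ ≤ sin θ := mul_le_sin hθ0.le (by linarith [hθ.2])
        have h2π : 0 < 2/π := by positivity
        have hlog : log (2/π) + log θ ≤ log (sin θ) := by
          rw [← log_mul h2π.ne' hθ0.ne']
          exact log_le_log (by positivity) hs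
        nlinarith [hlog]
      · filter_upwards [Ioo_mem_nhdsGT_of_mem (Set.mem_Ico.2 ⟨le_refl 0, pi_div_two_pos⟩)] with θ hθ
        have hθ0 : 0 < θ := hθ.1
        have hls : log (sin θ) ≤ 0 :=
          log_nonpos (sin_nonneg_of_nonneg_of_le_pi hθ0.le (by linarith [pi_pos, hθ.2])) (sin_le_one θ)
        nlinarith [hls]
    have : ContinuousWithinAt (fun θ : ℝ => θ * log (sin θ)) (Set.Ioi 0) 0 := by
      unfold ContinuousWithinAt
      simpa using hup
    rw [continuousWithinAt_Ioi_iff_Ici] at this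
    exact this.mono Set.Icc_subset_Ici_self
  · -- θ > 0
    have hs : 0 < sin θ := sin_pos_of_pos_of_lt_pi h0 (by linarith [pi_pos, hθ.2])
    exact (continuousAt_id.mul ((Real.continuousAt_log hs.ne').comp
      Real.continuous_sin.continuousAt)).continuousWithinAt

lemma hasDerivAt_F {θ : ℝ} (hs : sin θ ≠ 0) :
    HasDerivAt (fun θ : ℝ => θ * log (sin θ)) (log (sin θ) + θ * (cos θ / sin θ)) θ := by
  have h := (hasDerivAt_id θ).fun_mul ((Real.hasDerivAt_sin θ).log hs)
  simpa using h

lemma tcot_lt_one {θ : ℝ} (h0 : 0 < θ) (h2 : θ < π/2) : θ * (cos θ / sin θ) < 1 := by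
  have hc : 0 < cos θ := cos_pos_of_mem_Ioo ⟨by linarith [pi_pos], h2⟩
  have hs : 0 < sin θ := sin_pos_of_pos_of_lt_pi h0 (by linarith [pi_pos])
  have ht := Real.lt_tan h0 h2
  rw [tan_eq_sin_div_cos] at ht
  rw [mul_div_assoc'] at *
  rw [div_lt_one hs]
  calc θ * cos θ < (sin θ / cos θ) * cos θ := by nlinarith
    _ = sin θ := by field_simp

lemma gprime_integrableOn :
    IntegrableOn (fun θ : ℝ => 1 - (log (sin θ) + θ * (cos θ / sin θ))) (Set.Ioc 0 (π/2)) := by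
  apply intervalIntegral.integrableOn_deriv_of_nonneg
    (g := fun θ : ℝ => θ - θ * log (sin θ))
  · exact continuousOn_id.sub contF
  · intro x hx
    have hs : 0 < sin x := sin_pos_of_pos_of_lt_pi hx.1 (by linarith [pi_pos, hx.2])
    exact (hasDerivAt_id x).sub (hasDerivAt_F hs.ne')
  · intro x hx
    have hls : log (sin x) ≤ 0 := log_nonpos
      (sin_nonneg_of_nonneg_of_le_pi hx.1.le (by linarith [pi_pos, hx.2])) (sin_le_one x)
    have := tcot_lt_one hx.1 hx.2
    linarith

lemma tcot_integrableOn :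
    IntegrableOn (fun θ : ℝ => θ * (cos θ / sin θ)) (Set.Ioc 0 (π/2)) := by
  have hmeas : AEStronglyMeasurable (fun θ : ℝ => θ * (cos θ / sin θ))
      (volume.restrict (Set.Ioc 0 (π/2))) := by
    apply ContinuousOn.aestronglyMeasurable _ measurableSet_Ioc
    intro x hx
    have hs : 0 < sin x := sin_pos_of_pos_of_lt_pi hx.1 (by linarith [pi_pos, hx.2])
    exact (continuousAt_id.mul (Real.continuous_cos.continuousAt.div
      Real.continuous_sin.continuousAt hs.ne')).continuousWithinAt
  have hb : ∀ x ∈ Set.Ioc (0:ℝ) (π/2), x * (cos x / sin x) ≤ 1 := by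
    intro x hx
    rcases eq_or_lt_of_le hx.2 with h | h
    · subst h; rw [cos_pi_div_two]; norm_num
    · exact (tcot_lt_one hx.1 h).le
  apply Integrable.mono' (integrableOn_const (C := (1:ℝ)) measure_Ioc_lt_top.ne) hmeas
  refine (ae_restrict_iff' measurableSet_Ioc).2 ?_
  filter_upwards with x hx
  have hs : 0 < sin x := sin_pos_of_pos_of_lt_pi hx.1 (by linarith [pi_pos, hx.2])
  have hc : 0 ≤ cos x := cos_nonneg_of_mem_Icc ⟨by linarith [pi_pos, hx.1], hx.2⟩
  have hnn : 0 ≤ x * (cos x / sin x) := mul_nonneg hx.1.le (div_nonneg hc hs.le)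
  have : ‖x * (cos x / sin x)‖ = x * (cos x / sin x) := Real.norm_of_nonneg hnn
  rw [this]
  exact hb x hx

lemma logsin_integrableOn :
    IntegrableOn (fun θ : ℝ => log (sin θ)) (Set.Ioc 0 (π/2)) := by
  have h1 := gprime_integrableOn
  have h2 := tcot_integrableOn
  have h3 : IntegrableOn (fun _ : ℝ => (1:ℝ)) (Set.Ioc 0 (π/2)) :=
    integrableOn_const measure_Ioc_lt_top.ne
  have h4 : IntegrableOn
      ((((fun _ : ℝ => (1:ℝ)) - fun θ : ℝ => 1 - (log (sin θ) + θ * (cos θ / sin θ)))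
        - fun θ : ℝ => θ * (cos θ / sin θ))) (Set.Ioc 0 (π/2)) := (h3.sub h1).sub h2
  apply h4.congr_fun _ measurableSet_Ioc
  intro x _
  simp only [Pi.sub_apply]
  ring

lemma logsin_ii : IntervalIntegrable (fun θ : ℝ => log (sin θ)) volume 0 (π/2) := by
  rw [intervalIntegrable_iff_integrableOn_Ioc_of_le (by positivity)]
  exact logsin_integrableOn

lemma tcot_ii : IntervalIntegrable (fun θ : ℝ => θ * (cos θ / sin θ)) volume 0 (π/2) := by
  rw [intervalIntegrable_iff_integrableOn_Ioc_of_le (by positivity)]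
  exact tcot_integrableOn

lemma key_sum_zero :
    (∫ θ in (0:ℝ)..(π/2), log (sin θ)) + ∫ θ in (0:ℝ)..(π/2), θ * (cos θ / sin θ) = 0 := by
  have hderiv : ∀ x ∈ Set.Ioo (0:ℝ) (π/2), HasDerivAt (fun θ : ℝ => θ - θ * log (sin θ))
      (1 - (log (sin x) + x * (cos x / sin x))) x := by
    intro x hx
    have hs : 0 < sin x := sin_pos_of_pos_of_lt_pi hx.1 (by linarith [pi_pos, hx.2])
    exact (hasDerivAt_id x).sub (hasDerivAt_F hs.ne')
  have hint : IntervalIntegrable (fun x : ℝ => 1 - (log (sin x) + x * (cos x / sin x)))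
      volume 0 (π/2) :=
    ((_root_.intervalIntegrable_const (c := (1:ℝ))).sub (logsin_ii.add tcot_ii))
  have hftc := intervalIntegral.integral_eq_sub_of_hasDerivAt_of_le (by positivity)
    (continuousOn_id.sub contF) hderiv hint
  have hval : ((π/2) - (π/2) * log (sin (π/2))) - ((0:ℝ) - 0 * log (sin 0)) = π/2 := by
    rw [sin_pi_div_two]; simp
  simp only [Pi.sub_apply, id_eq] at hftc
  rw [hval] at hftc
  have hsplit : (∫ x in (0:ℝ)..(π/2), (1 - (log (sin x) + x * (cos x / sin x))))
      = (∫ _ in (0:ℝ)..(π/2), (1:ℝ)) - ((∫ x in (0:ℝ)..(π/2), log (sin x))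
        + ∫ x in (0:ℝ)..(π/2), x * (cos x / sin x)) := by
    rw [intervalIntegral.integral_sub _root_.intervalIntegrable_const (logsin_ii.add tcot_ii),
      intervalIntegral.integral_add logsin_ii tcot_ii]
  rw [hsplit] at hftc
  simp only [intervalIntegral.integral_const, smul_eq_mul, mul_one] at hftc
  linarith



lemma he_pi : (fun x : ℝ => log (sin (π - x))) = fun x : ℝ => log (sin x) := by
  funext x; rw [sin_pi_sub]

lemma he_pi2 : (fun x : ℝ => log (sin (π/2 - x))) = fun x : ℝ => log (cos x) := by
  funext x; rw [sin_pi_div_two_sub]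

lemma logsin_ii_right : IntervalIntegrable (fun θ : ℝ => log (sin θ)) volume (π/2) π := by
  have h := (logsin_ii.comp_sub_left π)
  rw [he_pi, show π - (0:ℝ) = π by ring, show π - π/2 = π/2 by ring] at h
  exact h.symm

lemma logcos_ii : IntervalIntegrable (fun θ : ℝ => log (cos θ)) volume 0 (π/2) := by
  have h := (logsin_ii.comp_sub_left (π/2))
  rw [he_pi2, show π/2 - (0:ℝ) = π/2 by ring, show π/2 - π/2 = (0:ℝ) by ring] at h
  exact h.symm

lemma logcos_integral : (∫ θ in (0:ℝ)..(π/2), log (cos θ)) = ∫ θ in (0:ℝ)..(π/2), log (sin θ) := by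
  have h := intervalIntegral.integral_comp_sub_left (a := (0:ℝ)) (b := π/2)
    (fun x : ℝ => log (sin x)) (π/2)
  rw [he_pi2, show π/2 - (0:ℝ) = π/2 by ring, show π/2 - π/2 = (0:ℝ) by ring] at h
  exact h

lemma logsin_right_integral :
    (∫ θ in (π/2:ℝ)..π, log (sin θ)) = ∫ θ in (0:ℝ)..(π/2), log (sin θ) := by
  have h := intervalIntegral.integral_comp_sub_left (a := (π/2:ℝ)) (b := π)
    (fun x : ℝ => log (sin x)) π
  rw [he_pi, show π - (π:ℝ) = 0 by ring, show π - π/2 = π/2 by ring] at h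
  exact h

lemma logsin_integral : (∫ θ in (0:ℝ)..(π/2), log (sin θ)) = -(π/2) * log 2 := by
  set J := ∫ θ in (0:ℝ)..(π/2), log (sin θ) with hJ
  have hsplit : (∫ θ in (0:ℝ)..π, log (sin θ)) = 2 * J := by
    rw [← intervalIntegral.integral_add_adjacent_intervals
      (a := (0:ℝ)) (b := π/2) (c := π) logsin_ii logsin_ii_right, logsin_right_integral]
    ring
  have hdup : (2:ℝ) * (∫ x in (0:ℝ)..(π/2), log (sin (2 * x)))
      = ∫ θ in (0:ℝ)..π, log (sin θ) := by
    have h := intervalIntegral.smul_integral_comp_mul_left (a := (0:ℝ)) (b := π/2)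
      (fun x : ℝ => log (sin x)) 2
    rw [show (2:ℝ) * 0 = 0 by ring, show (2:ℝ) * (π/2) = π by ring, smul_eq_mul] at h
    exact h
  have hexp : (∫ x in (0:ℝ)..(π/2), log (sin (2 * x)))
      = ∫ x in (0:ℝ)..(π/2), (log 2 + log (sin x) + log (cos x)) := by
    apply intervalIntegral.integral_congr_ae
    have hne : ∀ᵐ x : ℝ, x ≠ π/2 := by
      have h0 : (volume : Measure ℝ) {π/2} = 0 := measure_singleton _
      rw [← MeasureTheory.compl_mem_ae_iff] at h0
      filter_upwards [h0] with x hx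
      simpa using hx
    filter_upwards [hne] with x hx hxI
    rw [Set.uIoc_of_le (by positivity : (0:ℝ) ≤ π/2)] at hxI
    have hx2 : x < π/2 := lt_of_le_of_ne hxI.2 hx
    have hs : 0 < sin x := sin_pos_of_pos_of_lt_pi hxI.1 (by linarith [pi_pos, hxI.2])
    have hc : 0 < cos x := cos_pos_of_mem_Ioo ⟨by linarith [pi_pos, hxI.1], hx2⟩
    rw [sin_two_mul, mul_assoc, log_mul (by norm_num) (by positivity), log_mul hs.ne' hc.ne']
    ring
  have hsum : (∫ x in (0:ℝ)..(π/2), (log 2 + log (sin x) + log (cos x)))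
      = (π/2) * log 2 + J + J := by
    rw [intervalIntegral.integral_add (_root_.intervalIntegrable_const.add logsin_ii) logcos_ii,
      intervalIntegral.integral_add _root_.intervalIntegrable_const logsin_ii,
      intervalIntegral.integral_const, logcos_integral]
    simp only [smul_eq_mul, sub_zero]
    rfl
  rw [hexp, hsum, hsplit] at hdup
  linarith


theorem pi_log_two_central_binomial :
    (π/2) * Real.log 2
      = ∑' n : ℕ, (Nat.choose (2*n) n : ℝ) / ((2*(n:ℝ)+1)^2 * 2^(2*n)) := by
  have hterm : ∀ n : ℕ, (Nat.choose (2*n) n : ℝ) / ((2*(n:ℝ)+1)^2 * 2^(2*n))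
      = cb n / (2*(n:ℝ)+1)^2 := by
    intro n
    rw [cb, div_div, show (2:ℝ)^(2*n) = 4^n by rw [pow_mul]; norm_num]
    ring
  rw [tsum_congr hterm, sum_eq_integral]
  have h1 : (∫ θ in Set.Ioo (0:ℝ) (π/2), θ * cos θ / sin θ)
      = ∫ θ in (0:ℝ)..(π/2), θ * (cos θ / sin θ) := by
    rw [intervalIntegral.integral_of_le (by positivity : (0:ℝ) ≤ π/2),
      integral_Ioc_eq_integral_Ioo]
    apply setIntegral_congr_fun measurableSet_Ioo
    intro x _
    simp only [mul_div_assoc]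
  rw [h1]
  have h2 := key_sum_zero
  have h3 := logsin_integral
  linarith
end
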